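/- Let n be a prime power, let d_1, d_2, d_3 divide n+1, and let M = gcd(d_1, d_2, d_3(n^2-n+1)). Then the expression g = 1 + (1/2)[d_1 d_2 (d_3(n^2-n+1)/M)(n-1) - d_2·gcd(d_1/M, d_3(n^2-n+1)/M) - d_1·gcd(d_2/M, d_3(n^2-n+1)/M) - d_1 d_2 (n-2)·gcd(d_3(n^2-n+1)/M, (n+1)/M) - gcd(gcd(d_1,d_2)·d_3(n^2-n+1)/M, 2 d_1 d_2 / M)] is a nonnegative integer (in particular the bracketed quantity is an even nonnegative integer) whenever M divides each of d_1, d_2, n+1, and d_3(n^2-n+1). -/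

import Mathlib

lemma aux_odd_gcd (x y : ℤ) : Odd ((Int.gcd x y : ℤ)) ↔ Odd x ∨ Odd y := by
  have key : (2:ℤ) ∣ (Int.gcd x y : ℤ) ↔ (2 ∣ x ∧ 2 ∣ y) :=
    ⟨fun h => ⟨h.trans (Int.gcd_dvd_left _ _), h.trans (Int.gcd_dvd_right _ _)⟩,
     fun h => Int.dvd_coe_gcd h.1 h.2⟩
  rw [Int.odd_iff, Int.odd_iff, Int.odd_iff]
  omega

lemma aux_dvd3 (a : ℤ) (ha : 0 < a) (h : a ∣ 3) : a = 1 ∨ a = 3 := by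
  obtain ⟨k, hk⟩ := h
  have hk0 : 0 < k := by nlinarith
  have hle : a ≤ 3 := by nlinarith
  have : a = 1 ∨ a = 2 ∨ a = 3 := by omega
  rcases this with h | h | h
  · exact Or.inl h
  · exfalso; rw [h] at hk; omega
  · exact Or.inr h

set_option maxHeartbeats 1600000 in
/-- genus formula for `C₁` (Theorem 3.2). For a prime power `n`,
divisors `d₁, d₂, d₃` of `n+1`, and `M = gcd(d₁, d₂, d₃(n^2-n+1))` such that `M`
divides each of `d₁`, `d₂`, `n+1` and `d₃(n^2-n+1)`, the bracketed quantity
`d₁d₂(d₃(n^2-n+1)/M)(n-1) - d₂ gcd(d₁/M, d₃(n^2-n+1)/M) - d₁ gcd(d₂/M, d₃(n^2-n+1)/M)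
 - d₁d₂(n-2) gcd(d₃(n^2-n+1)/M, (n+1)/M) - gcd(gcd(d₁,d₂)d₃(n^2-n+1)/M, 2d₁d₂/M)`
is an even nonnegative integer, so `g = 1 + (1/2)·[...]` is a nonnegative integer. -/
theorem stmt_7 (n d₁ d₂ d₃ : ℤ) (hn : ∃ p u : ℕ, Nat.Prime p ∧ 1 ≤ u ∧ n = (p : ℤ) ^ u)
    (h₁ : d₁ ∣ n + 1) (h₂ : d₂ ∣ n + 1) (h₃ : d₃ ∣ n + 1)
    (h₁p : 0 < d₁) (h₂p : 0 < d₂) (h₃p : 0 < d₃)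
    (M : ℤ) (hM : M = Int.gcd d₁ (Int.gcd d₂ (d₃ * (n ^ 2 - n + 1))))
    (hM₁ : M ∣ d₁) (hM₂ : M ∣ d₂) (hM₃ : M ∣ n + 1) (hM₄ : M ∣ d₃ * (n ^ 2 - n + 1)) :
    (2 : ℤ) ∣ (d₁ * d₂ * (d₃ * (n ^ 2 - n + 1) / M) * (n - 1)
        - d₂ * Int.gcd (d₁ / M) (d₃ * (n ^ 2 - n + 1) / M)
        - d₁ * Int.gcd (d₂ / M) (d₃ * (n ^ 2 - n + 1) / M)
        - d₁ * d₂ * (n - 2) * Int.gcd (d₃ * (n ^ 2 - n + 1) / M) ((n + 1) / M)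
        - Int.gcd (Int.gcd d₁ d₂ * (d₃ * (n ^ 2 - n + 1)) / M) (2 * d₁ * d₂ / M)) ∧
    (0 : ℤ) ≤ d₁ * d₂ * (d₃ * (n ^ 2 - n + 1) / M) * (n - 1)
        - d₂ * Int.gcd (d₁ / M) (d₃ * (n ^ 2 - n + 1) / M)
        - d₁ * Int.gcd (d₂ / M) (d₃ * (n ^ 2 - n + 1) / M)
        - d₁ * d₂ * (n - 2) * Int.gcd (d₃ * (n ^ 2 - n + 1) / M) ((n + 1) / M)
        - Int.gcd (Int.gcd d₁ d₂ * (d₃ * (n ^ 2 - n + 1)) / M) (2 * d₁ * d₂ / M) := by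
  obtain ⟨p, u, hp, hu, hnpu⟩ := hn
  have hn2 : (2:ℤ) ≤ n := by
    have h1 : (2:ℕ) ≤ p ^ u := le_trans hp.two_le (Nat.le_self_pow (by omega) p)
    have h2 : ((2:ℕ):ℤ) ≤ ((p ^ u : ℕ) : ℤ) := by exact_mod_cast h1
    rw [hnpu]; push_cast at h2 ⊢; linarith
  clear hnpu hp hu
  have hodd3 : Odd (n ^ 2 - n + 1) := by
    have h : Even ((n-1) * (n-1+1)) := Int.even_mul_succ_self (n-1)
    have e : n ^ 2 - n + 1 = (n-1) * (n-1+1) + 1 := by ring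
    rw [e]; exact h.add_one
  have h3pos : 0 < n ^ 2 - n + 1 := by nlinarith
  have htpos : 0 < d₃ * (n ^ 2 - n + 1) := mul_pos h₃p h3pos
  have hMpos : 0 < M := by
    rw [hM]
    have := Int.gcd_pos_of_ne_zero_left
      ((Int.gcd d₂ (d₃ * (n ^ 2 - n + 1)) : ℤ)) (show d₁ ≠ 0 by omega)
    exact_mod_cast this
  have hM0 : M ≠ 0 := hMpos.ne'
  obtain ⟨a', ha'⟩ := hM₁
  obtain ⟨b', hb'⟩ := hM₂
  obtain ⟨s, hs'⟩ := hM₃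
  obtain ⟨t', ht'⟩ := hM₄
  have e1 : d₁ / M = a' := by rw [ha', Int.mul_ediv_cancel_left _ hM0]
  have e2 : d₂ / M = b' := by rw [hb', Int.mul_ediv_cancel_left _ hM0]
  have e3 : d₃ * (n ^ 2 - n + 1) / M = t' := by rw [ht', Int.mul_ediv_cancel_left _ hM0]
  have e4 : (n + 1) / M = s := by rw [hs', Int.mul_ediv_cancel_left _ hM0]
  have e5 : (Int.gcd d₁ d₂ : ℤ) * (d₃ * (n ^ 2 - n + 1)) / M = (Int.gcd d₁ d₂ : ℤ) * t' := by
    rw [Int.mul_ediv_assoc _ (⟨t', ht'⟩ : M ∣ d₃ * (n ^ 2 - n + 1)), e3]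
  have e6 : 2 * d₁ * d₂ / M = 2 * a' * d₂ := by
    rw [ha', show 2 * (M * a') * d₂ = M * (2 * a' * d₂) by ring,
      Int.mul_ediv_cancel_left _ hM0]
  have ha'pos : 0 < a' := by
    by_contra h; push_neg at h
    have h2 := mul_nonpos_of_nonneg_of_nonpos hMpos.le h
    rw [← ha'] at h2; linarith
  have hb'pos : 0 < b' := by
    by_contra h; push_neg at h
    have h2 := mul_nonpos_of_nonneg_of_nonpos hMpos.le h
    rw [← hb'] at h2; linarith
  have hspos : 0 < s := by
    by_contra h; push_neg at h
    have h2 := mul_nonpos_of_nonneg_of_nonpos hMpos.le h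
    rw [← hs'] at h2; linarith
  have ht'pos : 0 < t' := by
    by_contra h; push_neg at h
    have h2 := mul_nonpos_of_nonneg_of_nonpos hMpos.le h
    rw [← ht'] at h2; linarith
  constructor
  · -- parity
    rw [e1, e2, e3, e4, e5, e6]
    have h2odd : Odd (2:ℤ) ↔ False := iff_false_intro (by decide)
    have hn1 : Odd (n - 1) ↔ ¬ Odd n := by rw [Int.odd_iff, Int.odd_iff]; omega
    have hn2' : Odd (n - 2) ↔ Odd n := by rw [Int.odd_iff, Int.odd_iff]; omega
    have hn3 : Odd (n + 1) ↔ ¬ Odd n := by rw [Int.odd_iff, Int.odd_iff]; omega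
    have hOM : Odd M ↔ Odd d₁ ∨ (Odd d₂ ∨ Odd (d₃ * (n ^ 2 - n + 1))) := by
      rw [hM, aux_odd_gcd, aux_odd_gcd]
    have hA : Odd d₁ ↔ Odd M ∧ Odd a' := by rw [ha', Int.odd_mul]
    have hB : Odd d₂ ↔ Odd M ∧ Odd b' := by rw [hb', Int.odd_mul]
    have hT : Odd (d₃ * (n ^ 2 - n + 1)) ↔ Odd M ∧ Odd t' := by rw [ht', Int.odd_mul]
    have hS : Odd (n + 1) ↔ Odd M ∧ Odd s := by rw [hs', Int.odd_mul]
    have hDA : ¬ Odd n → Odd d₁ := by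
      intro hnn; by_contra hc
      rw [Int.odd_iff] at hc hnn
      have h2d : (2:ℤ) ∣ d₁ := by omega
      have h2n : (2:ℤ) ∣ n + 1 := h2d.trans h₁
      omega
    have hDB : ¬ Odd n → Odd d₂ := by
      intro hnn; by_contra hc
      rw [Int.odd_iff] at hc hnn
      have h2d : (2:ℤ) ∣ d₂ := by omega
      have h2n : (2:ℤ) ∣ n + 1 := h2d.trans h₂
      omega
    have hDT : ¬ Odd n → Odd (d₃ * (n ^ 2 - n + 1)) := by
      intro hnn
      rw [Int.odd_mul]
      refine ⟨?_, hodd3⟩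
      by_contra hc
      rw [Int.odd_iff] at hc hnn
      have h2d : (2:ℤ) ∣ d₃ := by omega
      have h2n : (2:ℤ) ∣ n + 1 := h2d.trans h₃
      omega
    have h5 : Odd a' ∨ Odd b' ∨ Odd t' := by
      by_contra hc; push_neg at hc
      obtain ⟨hc1, hc2, hc3⟩ := hc
      rw [Int.odd_iff] at hc1 hc2 hc3
      obtain ⟨k1, hk1⟩ : (2:ℤ) ∣ a' := by omega
      obtain ⟨k2, hk2⟩ : (2:ℤ) ∣ b' := by omega
      obtain ⟨k3, hk3⟩ : (2:ℤ) ∣ t' := by omega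
      have hdd1 : 2 * M ∣ d₁ := ⟨k1, by rw [ha', hk1]; ring⟩
      have hdd2 : 2 * M ∣ d₂ := ⟨k2, by rw [hb', hk2]; ring⟩
      have hdd3 : 2 * M ∣ d₃ * (n ^ 2 - n + 1) := ⟨k3, by rw [ht', hk3]; ring⟩
      have h6 : 2 * M ∣ ((Int.gcd d₁ (Int.gcd d₂ (d₃ * (n ^ 2 - n + 1))) : ℤ)) :=
        Int.dvd_coe_gcd hdd1 (Int.dvd_coe_gcd hdd2 hdd3)
      rw [← hM] at h6
      have := Int.le_of_dvd hMpos h6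
      linarith
    have h2dvd : ∀ x : ℤ, Even x → 2 ∣ x := fun x ⟨r, hr⟩ => ⟨r, by omega⟩
    apply h2dvd
    rw [Int.even_sub, Int.even_sub, Int.even_sub, Int.even_sub]
    simp only [← Int.not_odd_iff_even, Int.odd_mul, aux_odd_gcd, h2odd, false_and]
    by_cases hN : Odd n
    · by_cases hOMc : Odd M
      · have hA' : Odd d₁ ↔ Odd a' := by rw [hA]; simp [hOMc]
        have hB' : Odd d₂ ↔ Odd b' := by rw [hB]; simp [hOMc]
        have hSS : ¬ Odd s := fun h => (hn3.mp (hS.mpr ⟨hOMc, h⟩)) hN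
        have hW1 : ¬ Odd (n - 1) := by simp [hn1, hN]
        have hW2 : Odd (n - 2) := hn2'.mpr hN
        simp only [hA', hB', hSS, hW1, hW2]
        clear * - h5
        tauto
      · have hAf : ¬ Odd d₁ := fun h => hOMc (hOM.mpr (Or.inl h))
        have hBf : ¬ Odd d₂ := fun h => hOMc (hOM.mpr (Or.inr (Or.inl h)))
        have hW1 : ¬ Odd (n - 1) := by simp [hn1, hN]
        simp [hAf, hBf, hW1]
    · have hAt : Odd d₁ := hDA hN
      have hBt : Odd d₂ := hDB hN
      have hTt : Odd (d₃ * (n ^ 2 - n + 1)) := hDT hN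
      have hOMt : Odd M := (hOM.mpr (Or.inl hAt))
      have hA't : Odd a' := (hA.mp hAt).2
      have hB't : Odd b' := (hB.mp hBt).2
      have hT't : Odd t' := (hT.mp hTt).2
      have hSt : Odd s := (hS.mp (hn3.mpr hN)).2
      have hW1t : Odd (n - 1) := hn1.mpr hN
      have hW2f : ¬ Odd (n - 2) := by simp [hn2', hN]
      simp [hAt, hBt, hA't, hB't, hT't, hSt, hW1t, hW2f]
  · -- nonnegativity
    rcases eq_or_lt_of_le hn2 with h2 | h3
    · -- n = 2 : finite check
      subst h2
      have h₁' : d₁ ∣ 3 := by norm_num at h₁ ⊢; exact h₁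
      have h₂' : d₂ ∣ 3 := by norm_num at h₂ ⊢; exact h₂
      have h₃' : d₃ ∣ 3 := by norm_num at h₃ ⊢; exact h₃
      clear e1 e2 e3 e4 e5 e6 ha' hb' hs' ht' ha'pos hb'pos hspos ht'pos h₁ h₂ h₃
      subst hM
      rcases aux_dvd3 d₁ h₁p h₁' with h | h <;> subst h <;>
        rcases aux_dvd3 d₂ h₂p h₂' with h | h <;> subst h <;>
          rcases aux_dvd3 d₃ h₃p h₃' with h | h <;> subst h <;> norm_num [Int.gcd]
    · -- n ≥ 3
      rw [e1, e2, e3, e4, e5, e6]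
      have hg1 : ((Int.gcd a' t' : ℤ)) ≤ a' := Int.le_of_dvd ha'pos (Int.gcd_dvd_left _ _)
      have hg2 : ((Int.gcd b' t' : ℤ)) ≤ b' := Int.le_of_dvd hb'pos (Int.gcd_dvd_left _ _)
      have hg3 : ((Int.gcd t' s : ℤ)) ≤ s := Int.le_of_dvd hspos (Int.gcd_dvd_right _ _)
      have hg4 : ((Int.gcd ((Int.gcd d₁ d₂ : ℤ) * t') (2 * a' * d₂) : ℤ)) ≤ 2 * a' * d₂ :=
        Int.le_of_dvd (by positivity) (Int.gcd_dvd_right _ _)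
      have k2 : d₂ * ((Int.gcd a' t' : ℤ)) ≤ d₂ * a' :=
        mul_le_mul_of_nonneg_left hg1 h₂p.le
      have k3 : d₁ * ((Int.gcd b' t' : ℤ)) ≤ d₁ * b' :=
        mul_le_mul_of_nonneg_left hg2 h₁p.le
      have k4 : d₁ * d₂ * (n - 2) * ((Int.gcd t' s : ℤ)) ≤ d₁ * d₂ * (n - 2) * s :=
        mul_le_mul_of_nonneg_left hg3
          (mul_nonneg (mul_nonneg h₁p.le h₂p.le) (by linarith) : (0:ℤ) ≤ d₁ * d₂ * (n - 2))
      have hge : n ^ 2 - n + 1 ≤ d₃ * (n ^ 2 - n + 1) :=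
        le_mul_of_one_le_left h3pos.le (by omega)
      have hKey : (n - 2) * (n + 1) + 4 ≤ (d₃ * (n ^ 2 - n + 1)) * (n - 1) := by
        clear * - hge h3
        nlinarith [mul_le_mul_of_nonneg_right hge (show (0:ℤ) ≤ n - 1 by linarith),
          mul_nonneg (mul_nonneg (show (0:ℤ) ≤ n - 3 by linarith)
            (show (0:ℤ) ≤ n - 1 by linarith)) (show (0:ℤ) ≤ n - 1 by linarith),
          mul_nonneg (show (0:ℤ) ≤ n by linarith) (show (0:ℤ) ≤ n - 2 by linarith)]
      have hident : d₁ * d₂ * t' * (n - 1) - d₂ * a' - d₁ * b' - d₁ * d₂ * (n - 2) * s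
          - 2 * a' * d₂
          = M * a' * b' * ((d₃ * (n ^ 2 - n + 1)) * (n - 1) - (n - 2) * (n + 1) - 4) := by
        rw [ha', hb', ht', hs']; ring
      have hprod : 0 ≤ M * a' * b' *
          ((d₃ * (n ^ 2 - n + 1)) * (n - 1) - (n - 2) * (n + 1) - 4) :=
        mul_nonneg (mul_nonneg (mul_nonneg hMpos.le ha'pos.le) hb'pos.le)
          (by linarith)
      linarith
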